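/- Multiplicative identity theorem: Let P be a simple product rule with parameters α, β, γ ∈ ℚ (so α·γ = β·(β−1) and P ≈ α·xy + β·(xẏ + ẋy) + γ·ẋẏ), and let * be its P-product. Call P degenerate if β = 0 and γ = 0. Then * has a multiplicative identity (a series 𝟙 with f*𝟙 = 𝟙*f = f for every series f) if, and only if, P is nondegenerate; moreover, when P is nondegenerate there exists a constant η ∈ ℚ such that the unique series 𝟙 with 𝟙(ε) = 1 and δ_a 𝟙 = η·𝟙 for every a ∈ Σ is a multiplicative identity for *. -/

import Mathlib

namespace PSeries

/-- A (formal power) series over alphabet `A` with rational coefficients. -/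
abbrev Series (A : Type) : Type := List A → ℚ

/-- Left derivative of a series by a letter. -/
def deriv {A : Type} (a : A) (f : Series A) : Series A := fun w => f (a :: w)

/-- Right derivative of a series by a letter. -/
def derivR {A : Type} (b : A) (f : Series A) : Series A := fun w => f (w ++ [b])

/-- Reversal of a series. -/
def rev {A : Type} (f : Series A) : Series A := fun w => f w.reverse

/-- Terms over a set of variables `X`:  `u ::= x | 0 | c·u | u + v | u * v`. -/
inductive Term (X : Type) : Type
  | var : X → Term X
  | zero : Term X
  | smul : ℚ → Term X → Term X
  | add : Term X → Term X → Term X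
  | mul : Term X → Term X → Term X

namespace Term

/-- Simultaneous substitution of terms for variables. -/
def subst {X Y : Type} : Term X → (X → Term Y) → Term Y
  | var x, ρ => ρ x
  | zero, _ => zero
  | smul c u, ρ => smul c (u.subst ρ)
  | add u v, ρ => add (u.subst ρ) (v.subst ρ)
  | mul u v, ρ => mul (u.subst ρ) (v.subst ρ)

/-- Semantics of a term on series, with the product symbol interpreted by `m`. -/
def evalS {A X : Type} (m : Series A → Series A → Series A) :
    Term X → (X → Series A) → Series A
  | var x, ρ => ρ x
  | zero, _ => 0
  | smul c u, ρ => c • u.evalS m ρ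
  | add u v, ρ => u.evalS m ρ + v.evalS m ρ
  | mul u v, ρ => m (u.evalS m ρ) (v.evalS m ρ)

/-- Evaluation of a term in the rationals (product is rational multiplication). -/
def evalQ {X : Type} : Term X → (X → ℚ) → ℚ
  | var x, F => F x
  | zero, _ => 0
  | smul c u, F => c * u.evalQ F
  | add u v, F => u.evalQ F + v.evalQ F
  | mul u v, F => u.evalQ F * v.evalQ F

/-- Evaluation of a term in a commutative `ℚ`-algebra. -/
def evalA {R : Type} [CommRing R] [Algebra ℚ R] {X : Type} :
    Term X → (X → R) → R
  | var x, ρ => ρ x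
  | zero, _ => 0
  | smul c u, ρ => c • u.evalA ρ
  | add u v, ρ => u.evalA ρ + v.evalA ρ
  | mul u v, ρ => u.evalA ρ * v.evalA ρ

end Term

/-- `m` is the `P`-product for the product rule `P`; that is, `m` satisfies the
two defining equations `(f*g)(ε) = f(ε)·g(ε)` and `δ_a (f*g) = P(f, δ_a f, g, δ_a g)`. -/
def IsPProduct {A : Type} (P : Term (Fin 4)) (m : Series A → Series A → Series A) : Prop :=
  (∀ f g : Series A, m f g [] = f [] * g []) ∧
  (∀ (f g : Series A) (a : A),
    deriv a (m f g) = P.evalS m ![f, deriv a f, g, deriv a g])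

/-- The smallest congruence on terms generated by the axioms of
commutative (not necessarily unital) `ℚ`-algebras. -/
inductive TEq {X : Type} : Term X → Term X → Prop
  | refl (u : Term X) : TEq u u
  | symm {u v : Term X} : TEq u v → TEq v u
  | trans {u v w : Term X} : TEq u v → TEq v w → TEq u w
  | smul_congr (c : ℚ) {u v : Term X} : TEq u v → TEq (.smul c u) (.smul c v)
  | add_congr {u u' v v' : Term X} : TEq u u' → TEq v v' → TEq (.add u v) (.add u' v')
  | mul_congr {u u' v v' : Term X} : TEq u u' → TEq v v' → TEq (.mul u v) (.mul u' v')
  | one_smul (u : Term X) : TEq (.smul 1 u) u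
  | smul_smul (c d : ℚ) (u : Term X) : TEq (.smul c (.smul d u)) (.smul (c * d) u)
  | add_smul (c d : ℚ) (u : Term X) : TEq (.smul (c + d) u) (.add (.smul c u) (.smul d u))
  | smul_add (c : ℚ) (u v : Term X) : TEq (.smul c (.add u v)) (.add (.smul c u) (.smul c v))
  | add_zero (u : Term X) : TEq (.add u .zero) u
  | add_assoc (u v w : Term X) : TEq (.add (.add u v) w) (.add u (.add v w))
  | add_comm (u v : Term X) : TEq (.add u v) (.add v u)
  | neg_cancel (u : Term X) : TEq (.add u (.smul (-1) u)) .zero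
  | mul_addl (u v w : Term X) : TEq (.mul (.add u v) w) (.add (.mul u w) (.mul v w))
  | mul_smull (c : ℚ) (u v : Term X) : TEq (.mul (.smul c u) v) (.smul c (.mul u v))
  | mul_assoc (u v w : Term X) : TEq (.mul (.mul u v) w) (.mul u (.mul v w))
  | mul_comm (u v : Term X) : TEq (.mul u v) (.mul v u)

/-- A product rule `P` (a term over the variables `x = 0, ẋ = 1, y = 2, ẏ = 3`)
is special: it satisfies (P-add), (P-assoc) and (P-comm) up to the congruence `TEq`.
In the first two equations the six variables are `x = 0, ẋ = 1, y = 2, ẏ = 3, z = 4, ż = 5`. -/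
def Special (P : Term (Fin 4)) : Prop :=
  TEq (P.subst (![.add (.var 0) (.var 2), .add (.var 1) (.var 3), .var 4, .var 5] :
        Fin 4 → Term (Fin 6)))
      (.add (P.subst (![.var 0, .var 1, .var 4, .var 5] : Fin 4 → Term (Fin 6)))
            (P.subst (![.var 2, .var 3, .var 4, .var 5] : Fin 4 → Term (Fin 6)))) ∧
  TEq (P.subst (![.var 0, .var 1, .mul (.var 2) (.var 4),
        P.subst (![.var 2, .var 3, .var 4, .var 5] : Fin 4 → Term (Fin 6))] :
        Fin 4 → Term (Fin 6)))
      (P.subst (![.mul (.var 0) (.var 2),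
        P.subst (![.var 0, .var 1, .var 2, .var 3] : Fin 4 → Term (Fin 6)), .var 4, .var 5] :
        Fin 4 → Term (Fin 6))) ∧
  TEq P (P.subst (![.var 2, .var 3, .var 0, .var 1] : Fin 4 → Term (Fin 4)))

/-- A binary operation on series is bilinear, associative and commutative. -/
def IsBAC {A : Type} (m : Series A → Series A → Series A) : Prop :=
  (∀ f g h : Series A, m (f + g) h = m f h + m g h) ∧
  (∀ (c : ℚ) (f g : Series A), m (c • f) g = c • m f g) ∧
  (∀ f g h : Series A, m f (g + h) = m f g + m f h) ∧
  (∀ (c : ℚ) (f g : Series A), m f (c • g) = c • m f g) ∧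
  (∀ f g h : Series A, m (m f g) h = m f (m g h)) ∧
  (∀ f g : Series A, m f g = m g f)

/-- The smallest set of series containing `0` and the generators `G`, closed under
scalar multiplication, addition, and the product `m`. -/
inductive InAlg {A : Type} (m : Series A → Series A → Series A) (G : Set (Series A)) :
    Series A → Prop
  | zero : InAlg m G 0
  | gen {g : Series A} : g ∈ G → InAlg m G g
  | smul (c : ℚ) {f : Series A} : InAlg m G f → InAlg m G (c • f)
  | add {f g : Series A} : InAlg m G f → InAlg m G g → InAlg m G (f + g)
  | mul {f g : Series A} : InAlg m G f → InAlg m G g → InAlg m G (m f g)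

/-- `f` is `P`-finite (w.r.t. the `P`-product `m`): there are finitely many generators
`g 0 = f, g 1, …` all of whose left derivatives lie in the algebra they generate. -/
def PFinite {A : Type} (m : Series A → Series A → Series A) (f : Series A) : Prop :=
  ∃ (k : ℕ) (g : Fin (k + 1) → Series A),
    g 0 = f ∧ ∀ (i : Fin (k + 1)) (a : A), InAlg m (Set.range g) (deriv a (g i))

/-- A `P`-automaton: output function `out` and transition function `tr`. -/
structure PAutomaton (A X : Type) where
  out : X → ℚ
  tr : A → X → Term X

/-- The `P`-extension of a function `D : X → Term X` to all terms. -/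
def pext {X : Type} (P : Term (Fin 4)) (D : X → Term X) : Term X → Term X
  | .var x => D x
  | .zero => .zero
  | .smul c u => .smul c (pext P D u)
  | .add u v => .add (pext P D u) (pext P D v)
  | .mul u v => P.subst ![u, pext P D u, v, pext P D v]

/-- Homomorphic extension of the output function of a `P`-automaton to all terms. -/
def PAutomaton.outT {A X : Type} (𝒜 : PAutomaton A X) (u : Term X) : ℚ :=
  u.evalQ 𝒜.out

/-- Extension of the (`P`-extended) transition function of a `P`-automaton to words. -/
def trWord {A X : Type} (P : Term (Fin 4)) (𝒜 : PAutomaton A X) :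
    List A → Term X → Term X
  | [], u => u
  | a :: w, u => trWord P 𝒜 w (pext P (𝒜.tr a) u)

/-- The semantics of a `P`-automaton: the unique map with `⟦α⟧(ε) = F(α)` and
`δ_a ⟦α⟧ = ⟦Δ̃_a α⟧`; concretely, `⟦α⟧(w) = F(Δ̃_w α)`. -/
def asem {A X : Type} (P : Term (Fin 4)) (𝒜 : PAutomaton A X) (u : Term X) : Series A :=
  fun w => (trWord P 𝒜 w u).evalQ 𝒜.out

/-- `ℚ[X]⁰`: polynomials in commuting variables `X` with zero constant term. -/
noncomputable def Aug (X : Type) : Submodule ℚ (MvPolynomial X ℚ) where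
  carrier := {p | MvPolynomial.coeff 0 p = 0}
  add_mem' := by
    intro a b ha hb
    simp only [Set.mem_setOf_eq, MvPolynomial.coeff_add] at *
    rw [ha, hb, add_zero]
  zero_mem' := by simp
  smul_mem' := by
    intro c p hp
    simp only [Set.mem_setOf_eq, MvPolynomial.coeff_smul] at *
    rw [hp, smul_zero]

/-- The variable `x` as an element of `ℚ[X]⁰`. -/
noncomputable def Aug.var {X : Type} (x : X) : Aug X :=
  ⟨MvPolynomial.X x, by
    show MvPolynomial.coeff 0 (MvPolynomial.X x) = 0
    simp [MvPolynomial.coeff_X']⟩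

/-- The product of two elements of `ℚ[X]⁰`, again in `ℚ[X]⁰`. -/
noncomputable def Aug.mul {X : Type} (p q : Aug X) : Aug X :=
  ⟨(p : MvPolynomial X ℚ) * (q : MvPolynomial X ℚ), by
    show MvPolynomial.coeff 0 _ = 0
    have hp : MvPolynomial.constantCoeff (p : MvPolynomial X ℚ) = 0 := p.2
    have hq : MvPolynomial.constantCoeff (q : MvPolynomial X ℚ) = 0 := q.2
    have := map_mul MvPolynomial.constantCoeff (p : MvPolynomial X ℚ) (q : MvPolynomial X ℚ)
    simpa [MvPolynomial.constantCoeff_eq, hp, hq] using this⟩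

/-- A polynomial `P`-automaton over variables `X`. -/
structure PolyAutomaton (A X : Type) where
  out : X → ℚ
  tr : A → X → Aug X

/-- Extension to words of a family of (extended) transition maps on `ℚ[X]⁰`. -/
noncomputable def trWordP {A X : Type} (Dt : A → (Aug X →ₗ[ℚ] Aug X)) : List A → Aug X → Aug X
  | [], p => p
  | a :: w, p => trWordP Dt w (Dt a p)

/-- The ideal of `ℚ[X]` generated by all polynomials reachable from the initial
variable `x1` by words of length at most `n`. -/
noncomputable def reachIdeal {A X : Type} (Dt : A → (Aug X →ₗ[ℚ] Aug X)) (x1 : X) (n : ℕ) :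
    Ideal (MvPolynomial X ℚ) :=
  Ideal.span {p : MvPolynomial X ℚ |
    ∃ w : List A, w.length ≤ n ∧ p = ((trWordP Dt w (Aug.var x1) : Aug X) : MvPolynomial X ℚ)}


/-- The simple form `α·(x*y) + β·(x*ẏ + ẋ*y) + γ·(ẋ*ẏ)` as a term over
`x = 0, ẋ = 1, y = 2, ẏ = 3`. -/
def simpleForm (a b c : ℚ) : Term (Fin 4) :=
  .add (.smul a (.mul (.var 0) (.var 2)))
    (.add (.smul b (.add (.mul (.var 0) (.var 3)) (.mul (.var 1) (.var 2))))
      (.smul c (.mul (.var 1) (.var 3))))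

/-! ### Auxiliary machinery -/

/-- Uniqueness of the `P`-product (strong induction on word length). -/
lemma pprod_agree {A : Type} (P : Term (Fin 4)) (m1 m2 : Series A → Series A → Series A)
    (h1 : IsPProduct P m1) (h2 : IsPProduct P m2) :
    ∀ n : ℕ, ∀ f1 f2 g1 g2 : Series A,
      (∀ w : List A, w.length ≤ n → f1 w = f2 w) →
      (∀ w : List A, w.length ≤ n → g1 w = g2 w) →
      ∀ w : List A, w.length ≤ n → m1 f1 g1 w = m2 f2 g2 w := by
  intro n
  induction n using Nat.strong_induction_on with
  | _ n IH =>
    intro f1 f2 g1 g2 hf hg w hw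
    match w with
    | [] => rw [h1.1, h2.1, hf [] (by simp), hg [] (by simp)]
    | x :: w' =>
      have hw' : w'.length < n := by
        simpa using lt_of_lt_of_le (Nat.lt_succ_self _) hw
      have key : ∀ (u : Term (Fin 4)) (ρ1 ρ2 : Fin 4 → Series A),
          (∀ (i : Fin 4) (v : List A), v.length ≤ w'.length → ρ1 i v = ρ2 i v) →
          ∀ v : List A, v.length ≤ w'.length →
            u.evalS m1 ρ1 v = u.evalS m2 ρ2 v := by
        intro u
        induction u with
        | var i => intro ρ1 ρ2 hρ v hv; exact hρ i v hv
        | zero => intro ρ1 ρ2 hρ v hv; rfl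
        | smul q u ih =>
          intro ρ1 ρ2 hρ v hv
          simp only [Term.evalS, Pi.smul_apply, ih ρ1 ρ2 hρ v hv]
        | add u u' ihu ihu' =>
          intro ρ1 ρ2 hρ v hv
          simp only [Term.evalS, Pi.add_apply, ihu ρ1 ρ2 hρ v hv, ihu' ρ1 ρ2 hρ v hv]
        | mul u u' ihu ihu' =>
          intro ρ1 ρ2 hρ v hv
          exact IH w'.length hw' _ _ _ _ (ihu ρ1 ρ2 hρ) (ihu' ρ1 ρ2 hρ) v hv
      have e1 : m1 f1 g1 (x :: w') = P.evalS m1 ![f1, deriv x f1, g1, deriv x g1] w' :=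
        congrFun (h1.2 f1 g1 x) w'
      have e2 : m2 f2 g2 (x :: w') = P.evalS m2 ![f2, deriv x f2, g2, deriv x g2] w' :=
        congrFun (h2.2 f2 g2 x) w'
      rw [e1, e2]
      apply key P _ _ _ w' le_rfl
      intro i v hv
      have hv' : v.length ≤ n := le_trans hv (le_of_lt hw')
      have hxv : (x :: v).length ≤ n := by
        simpa using Nat.succ_le_of_lt (lt_of_le_of_lt hv hw')
      fin_cases i
      · exact hf v hv'
      · exact hf (x :: v) hxv
      · exact hg v hv'
      · exact hg (x :: v) hxv

lemma pprod_unique {A : Type} (P : Term (Fin 4)) {m1 m2 : Series A → Series A → Series A}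
    (h1 : IsPProduct P m1) (h2 : IsPProduct P m2) : m1 = m2 := by
  funext f g w
  exact pprod_agree P m1 m2 h1 h2 w.length f f g g (fun _ _ => rfl) (fun _ _ => rfl) w le_rfl

/-- The canonical product for the simple form. -/
def m0 {A : Type} (a b c : ℚ) : Series A → Series A → Series A
  | f, g, [] => f [] * g []
  | f, g, x :: w =>
      a * m0 a b c f g w
        + b * (m0 a b c f (deriv x g) w + m0 a b c (deriv x f) g w)
        + c * m0 a b c (deriv x f) (deriv x g) w

lemma m0_nil {A : Type} (a b c : ℚ) (f g : Series A) : m0 a b c f g [] = f [] * g [] := rfl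

lemma m0_cons {A : Type} (a b c : ℚ) (f g : Series A) (x : A) (w : List A) :
    m0 a b c f g (x :: w) =
      a * m0 a b c f g w
        + b * (m0 a b c f (deriv x g) w + m0 a b c (deriv x f) g w)
        + c * m0 a b c (deriv x f) (deriv x g) w := rfl

lemma deriv_add {A : Type} (x : A) (f g : Series A) :
    deriv x (f + g) = deriv x f + deriv x g := rfl

lemma deriv_smul {A : Type} (x : A) (q : ℚ) (f : Series A) :
    deriv x (q • f) = q • deriv x f := rfl

lemma m0_addl {A : Type} (a b c : ℚ) (f g h : Series A) :
    m0 a b c (f + g) h = m0 a b c f h + m0 a b c g h := by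
  funext w
  induction w generalizing f g h with
  | nil => simp [m0_nil, Pi.add_apply]; ring
  | cons x w ih =>
    simp only [m0_cons, deriv_add, Pi.add_apply, ih]
    ring

lemma m0_smull {A : Type} (a b c q : ℚ) (f h : Series A) :
    m0 a b c (q • f) h = q • m0 a b c f h := by
  funext w
  induction w generalizing f h with
  | nil => simp [m0_nil, Pi.smul_apply, smul_eq_mul]; ring
  | cons x w ih =>
    simp only [m0_cons, deriv_smul, Pi.smul_apply, smul_eq_mul, ih]
    ring

lemma m0_comm {A : Type} (a b c : ℚ) (f g : Series A) :
    m0 a b c f g = m0 a b c g f := by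
  funext w
  induction w generalizing f g with
  | nil => simp [m0_nil]; ring
  | cons x w ih =>
    simp only [m0_cons]
    rw [ih f g, ih f (deriv x g), ih (deriv x f) g, ih (deriv x f) (deriv x g)]
    ring

lemma m0_addr {A : Type} (a b c : ℚ) (f g h : Series A) :
    m0 a b c f (g + h) = m0 a b c f g + m0 a b c f h := by
  rw [m0_comm, m0_addl, m0_comm a b c g f, m0_comm a b c h f]

lemma m0_smulr {A : Type} (a b c q : ℚ) (f g : Series A) :
    m0 a b c f (q • g) = q • m0 a b c f g := by
  rw [m0_comm, m0_smull, m0_comm a b c g f]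

lemma deriv_m0 {A : Type} (a b c : ℚ) (x : A) (f g : Series A) :
    deriv x (m0 a b c f g) =
      a • m0 a b c f g
        + b • (m0 a b c f (deriv x g) + m0 a b c (deriv x f) g)
        + c • m0 a b c (deriv x f) (deriv x g) := by
  funext w
  simp only [deriv, Pi.add_apply, Pi.smul_apply, smul_eq_mul]
  exact m0_cons a b c f g x w

lemma m0_assoc {A : Type} (a b c : ℚ) (habc : a * c = b * (b - 1)) (f g h : Series A) :
    m0 a b c (m0 a b c f g) h = m0 a b c f (m0 a b c g h) := by
  funext w
  induction w generalizing f g h with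
  | nil => simp [m0_nil]; ring
  | cons x w ih =>
    simp only [m0_cons, deriv_m0, m0_addl, m0_addr, m0_smull, m0_smulr,
      Pi.add_apply, Pi.smul_apply, smul_eq_mul, ih]
    linear_combination
      (m0 a b c f (m0 a b c g (deriv x h)) w
        - m0 a b c (deriv x f) (m0 a b c g h) w) * habc

lemma evalS_teq {A : Type} (a b c : ℚ) (habc : a * c = b * (b - 1)) {X : Type}
    {u v : Term X} (h : TEq u v) (ρ : X → Series A) :
    u.evalS (m0 a b c) ρ = v.evalS (m0 a b c) ρ := by
  induction h with
  | refl u => rfl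
  | symm _ ih => exact ih.symm
  | trans _ _ ih1 ih2 => exact ih1.trans ih2
  | smul_congr q _ ih => simp only [Term.evalS, ih]
  | add_congr _ _ ih1 ih2 => simp only [Term.evalS, ih1, ih2]
  | mul_congr _ _ ih1 ih2 => simp only [Term.evalS, ih1, ih2]
  | one_smul u => simp only [Term.evalS, one_smul]
  | smul_smul q d u => simp only [Term.evalS, smul_smul]
  | add_smul q d u => simp only [Term.evalS, add_smul]
  | smul_add q u v => simp only [Term.evalS, smul_add]
  | add_zero u => simp only [Term.evalS, add_zero]
  | add_assoc u v w => simp only [Term.evalS, add_assoc]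
  | add_comm u v => simp only [Term.evalS]; exact add_comm _ _
  | neg_cancel u => simp only [Term.evalS, neg_one_smul]; exact add_neg_cancel _
  | mul_addl u v w => simp only [Term.evalS, m0_addl]
  | mul_smull q u v => simp only [Term.evalS, m0_smull]
  | mul_assoc u v w => simp only [Term.evalS, m0_assoc a b c habc]
  | mul_comm u v => simp only [Term.evalS]; exact m0_comm _ _ _ _ _

lemma isPProduct_m0 {A : Type} (a b c : ℚ) :
    IsPProduct (simpleForm a b c) (m0 a b c (A := A)) := by
  constructor
  · intro f g; rfl
  · intro f g x
    funext w
    simp only [simpleForm, Term.evalS, Matrix.cons_val_zero, Matrix.cons_val_one,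
      Matrix.head_cons, Matrix.cons_val_two, Matrix.tail_cons, Matrix.cons_val_three,
      Pi.add_apply, Pi.smul_apply, smul_eq_mul]
    show m0 a b c f g (x :: w) = _
    rw [m0_cons]; ring

lemma m0_identity {A : Type} (a b c η : ℚ) (h1 : a + b * η = 0) (h2 : b + c * η = 1)
    (e : Series A) (he1 : e [] = 1) (he2 : ∀ x : A, deriv x e = η • e)
    (f : Series A) : m0 a b c f e = f := by
  funext w
  induction w generalizing f with
  | nil => simp [m0_nil, he1]
  | cons x w ih =>
    rw [m0_cons, he2 x, m0_smulr, m0_smulr, Pi.smul_apply, Pi.smul_apply, smul_eq_mul,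
      smul_eq_mul, ih (deriv x f)]
    have : deriv x f w = f (x :: w) := rfl
    rw [this]
    linear_combination m0 a b c f e w * h1 + f (x :: w) * h2

/-- **Multiplicative identity theorem.** A simple product has a multiplicative identity
iff it is nondegenerate (`¬(β = 0 ∧ γ = 0)`); moreover, in the nondegenerate case there
is a constant `η` such that the unique series `𝟙` with `𝟙(ε) = 1` and `δ_a 𝟙 = η·𝟙`
is a multiplicative identity. -/
theorem multiplicative_identity {A : Type} [Fintype A] [Nonempty A]
    (P : Term (Fin 4)) (a b c : ℚ) (habc : a * c = b * (b - 1))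
    (hform : TEq P (simpleForm a b c))
    (m : Series A → Series A → Series A) (hm : IsPProduct P m) :
    ((∃ e : Series A, ∀ f : Series A, m f e = f ∧ m e f = f) ↔ ¬(b = 0 ∧ c = 0)) ∧
    (¬(b = 0 ∧ c = 0) →
      ∃ η : ℚ, ∀ e : Series A,
        (e [] = 1 ∧ ∀ x : A, deriv x e = η • e) →
        ∀ f : Series A, m f e = f ∧ m e f = f) := by
  classical
  -- `m` coincides with the canonical product `m0 a b c`.
  have hm0 : IsPProduct P (m0 a b c (A := A)) := by
    refine ⟨fun f g => rfl, fun f g x => ?_⟩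
    rw [evalS_teq a b c habc hform]
    exact (isPProduct_m0 a b c).2 f g x
  have hmeq : m = m0 a b c := pprod_unique P hm hm0
  subst hmeq
  -- the constant η
  set η : ℚ := if c = 0 then -a else (1 - b) / c with hη
  have hkey : ¬(b = 0 ∧ c = 0) → a + b * η = 0 ∧ b + c * η = 1 := by
    intro hbc
    by_cases hc : c = 0
    · have hb : b = 1 := by
        have hb0 : b * (b - 1) = 0 := by rw [← habc, hc, mul_zero]
        rcases mul_eq_zero.mp hb0 with h | h
        · exact absurd ⟨h, hc⟩ hbc
        · linarith
      simp [hη, hc, hb]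
    · constructor
      · rw [hη, if_neg hc]
        field_simp
        linarith [habc]
      · rw [hη, if_neg hc]
        have hcc : c * ((1 - b) / c) = 1 - b := by field_simp
        linarith
  have hid : ¬(b = 0 ∧ c = 0) → ∀ e : Series A,
      (e [] = 1 ∧ ∀ x : A, deriv x e = η • e) →
      ∀ f : Series A, m0 a b c f e = f ∧ m0 a b c e f = f := by
    intro hbc e ⟨he1, he2⟩ f
    have h := m0_identity a b c η (hkey hbc).1 (hkey hbc).2 e he1 he2 f
    exact ⟨h, (m0_comm a b c e f).trans h⟩
  constructor
  · constructor
    · rintro ⟨e, he⟩ ⟨hb, hc⟩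
      subst hb; subst hc
      obtain ⟨x0⟩ := ‹Nonempty A›
      set f : Series A := fun w => if w = [x0] then 1 else 0 with hf
      have h1 : m0 a 0 0 f e = f := (he f).1
      have h2 : m0 a 0 0 f e [x0] = a * (f [] * e []) := by
        rw [m0_cons]; simp [m0_nil]
      rw [h1] at h2
      simp [hf] at h2
    · intro hbc
      refine ⟨fun w => η ^ w.length, fun f => ?_⟩
      apply hid hbc
      constructor
      · simp
      · intro x
        funext w
        simp [deriv, pow_succ, Pi.smul_apply, smul_eq_mul]
        ring
  · intro hbc
    exact ⟨η, hid hbc⟩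

end PSeries
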